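/- Let G be a finite group acting by automorphisms on a finitely generated abelian group A. If the action is Engel (for every a ∈ A and g ∈ G there exists n ≥ 1 with the n-fold iterated commutator [a, g, …, g] = 1), then the subgroup of A generated by all commutators [a,g] = a⁻¹ · (a • g) is finite. -/

import Mathlib

/-- Iterated generalized commutator for a group action:
`aengel a g 0 = a`, `aengel a g (n+1) = [aengel a g n, g]` where `[a,g] = a⁻¹ · (a • g)`. -/
def aengel {G A : Type*} [Group G] [CommGroup A] [MulDistribMulAction G A]
    (a : A) (g : G) : ℕ → A
  | 0 => a
  | n + 1 => (aengel a g n)⁻¹ * g • aengel a g n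

lemma aengel_shift {G A : Type*} [Group G] [CommGroup A] [MulDistribMulAction G A]
    (a : A) (g : G) (n : ℕ) :
    aengel a g (n + 1) = aengel (a⁻¹ * g • a) g n := by
  induction n with
  | zero => rfl
  | succ n ih => rw [show n + 1 + 1 = (n + 1) + 1 from rfl, aengel, ih]; rfl

lemma telescope {G A : Type*} [Group G] [CommGroup A] [MulDistribMulAction G A]
    (a : A) (g : G) (i : ℕ) :
    a⁻¹ * g ^ i • a = ∏ j ∈ Finset.range i, g ^ j • (a⁻¹ * g • a) := by
  induction i with
  | zero => simp
  | succ i ih =>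
      rw [Finset.prod_range_succ, ← ih, smul_mul', smul_inv', smul_smul, ← pow_succ]
      group

lemma key {G A : Type*} [Group G] [CommGroup A] [MulDistribMulAction G A]
    (g : G) (m : ℕ) (hg : g ^ m = 1) :
    ∀ (n : ℕ) (a : A), aengel a g n = 1 → (a⁻¹ * g • a) ^ (m ^ n) = 1 := by
  intro n
  induction n with
  | zero =>
      intro a ha
      simp only [aengel] at ha
      simp [ha]
  | succ n ih =>
      intro a ha
      rw [aengel_shift] at ha
      set c := a⁻¹ * g • a with hc
      set e := c⁻¹ * g • c with he
      have hE : e ^ (m ^ n) = 1 := ih c ha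
      have h1 : (1 : A) = ∏ j ∈ Finset.range m, g ^ j • c := by
        rw [← telescope a g m, hg, one_smul, inv_mul_cancel]
      have h2 : ∀ j, g ^ j • c = c * ∏ k ∈ Finset.range j, g ^ k • e := by
        intro j
        rw [← telescope c g j]
        group
      have h3 : (1 : A) = c ^ m * ∏ j ∈ Finset.range m, ∏ k ∈ Finset.range j, g ^ k • e := by
        rw [h1]
        rw [Finset.prod_congr rfl fun j _ => h2 j, Finset.prod_mul_distrib,
          Finset.prod_const, Finset.card_range]
      have h4 : c ^ m = (∏ j ∈ Finset.range m, ∏ k ∈ Finset.range j, g ^ k • e)⁻¹ := by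
        rw [eq_inv_iff_mul_eq_one, ← h3]
      rw [pow_succ', pow_mul, h4, inv_pow, ← Finset.prod_pow]
      have : ∀ j ∈ Finset.range m,
          (∏ k ∈ Finset.range j, g ^ k • e) ^ m ^ n = 1 := by
        intro j _
        rw [← Finset.prod_pow]
        apply Finset.prod_eq_one
        intro k _
        rw [← smul_pow', hE, smul_one]
      rw [Finset.prod_congr rfl this, Finset.prod_const_one, inv_one]

theorem stmt_2 {G A : Type*} [Group G] [Finite G] [CommGroup A] [Group.FG A]
    [MulDistribMulAction G A]
    (hEngel : ∀ (a : A) (g : G), ∃ n, 1 ≤ n ∧ aengel a g n = 1) :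
    (Subgroup.closure {x : A | ∃ (a : A) (g : G), x = a⁻¹ * g • a} : Set A).Finite := by
  set S : Set A := {x : A | ∃ (a : A) (g : G), x = a⁻¹ * g • a} with hS
  set H := Subgroup.closure S with hH
  -- every element of H has finite order
  have hle : H ≤ CommGroup.torsion A := by
    rw [hH, Subgroup.closure_le]
    rintro x ⟨a, g, rfl⟩
    have hg : g ^ orderOf g = 1 := pow_orderOf_eq_one g
    obtain ⟨n, -, hn⟩ := hEngel a g
    have := key g (orderOf g) hg n a hn
    refine isOfFinOrder_iff_pow_eq_one.mpr ⟨orderOf g ^ n, ?_, this⟩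
    exact Nat.pow_pos (n := n) (orderOf_pos g)
  have htor : Monoid.IsTorsion H := by
    intro x
    have : IsOfFinOrder (x : A) := hle x.2
    obtain ⟨k, hk, hxk⟩ := isOfFinOrder_iff_pow_eq_one.mp this
    exact isOfFinOrder_iff_pow_eq_one.mpr ⟨k, hk, by ext; push_cast [hxk]; simp [hxk]⟩
  -- H is finitely generated
  haveI : Module.Finite ℤ (Additive A) := Module.Finite.iff_addGroup_fg.mpr inferInstance
  have hfgadd : H.toAddSubgroup.FG := by
    have hsub : (AddSubgroup.toIntSubmodule H.toAddSubgroup).FG := IsNoetherian.noetherian _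
    have := (Submodule.fg_iff_addSubgroup_fg (AddSubgroup.toIntSubmodule H.toAddSubgroup)).mp hsub
    rwa [AddSubgroup.toIntSubmodule_toAddSubgroup] at this
  have hfg : H.FG := (Subgroup.fg_iff_add_fg H).mpr hfgadd
  haveI : Group.FG H := (Group.fg_iff_subgroup_fg H).mpr hfg
  haveI : Finite H := CommGroup.finite_of_fg_torsion H htor
  exact Set.toFinite _
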